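/- arXiv:1403.3831 — 2 statements merged into one kernel-verified Lean document; each statement's English description precedes it below -/
import Mathlib

section
/- Let (M, ρ) be a metric space with M infinite. If there exist x, y ∈ M with ρ(x, y) = mst(M, ρ), where mst(M, ρ) denotes the infimum of lengths of spanning trees on M, then no minimal spanning tree on (M, ρ) exists. -/
open scoped ENNReal

namespace MSTPaper

variable {M : Type*}

/-- The length of an edge `e` of a graph on a metric space: the extended
distance between its endpoints. -/
noncomputable def edgeLen [MetricSpace M] (e : Sym2 M) : ℝ≥0∞ :=
  Sym2.lift ⟨fun x y => edist x y, fun x y => edist_comm x y⟩ e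

/-- The length of a graph: the (possibly infinite) sum of the lengths of its edges. -/
noncomputable def graphLen [MetricSpace M] (G : SimpleGraph M) : ℝ≥0∞ :=
  ∑' e : G.edgeSet, edgeLen (e : Sym2 M)

/-- The distance between two subsets of a metric space. -/
noncomputable def setDist [MetricSpace M] (A B : Set M) : ℝ≥0∞ :=
  ⨅ x ∈ A, ⨅ y ∈ B, edist x y

/-- A minimal spanning tree on the metric space `M`: a spanning tree of finite
length whose length equals the infimum of lengths of all spanning trees on `M`. -/
def IsMST [MetricSpace M] (T : SimpleGraph M) : Prop :=
  T.IsTree ∧ graphLen T < ⊤ ∧ ∀ T' : SimpleGraph M, T'.IsTree → graphLen T ≤ graphLen T'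

/-- An edge `uv` of `G` is exact if its length equals the distance between the
two connected components obtained by removing it. -/
def ExactEdge [MetricSpace M] (G : SimpleGraph M) (u v : M) : Prop :=
  edist u v = setDist {x | (G.deleteEdges {s(u,v)}).Reachable u x}
                      {x | (G.deleteEdges {s(u,v)}).Reachable v x}


lemma edgeLen_mk [MetricSpace M] (a b : M) : edgeLen s(a, b) = edist a b := rfl

/-- Triangle inequality along a walk. -/
lemma edist_le_walk_sum [MetricSpace M] {G : SimpleGraph M} {a b : M} (w : G.Walk a b) :
    edist a b ≤ (w.edges.map edgeLen).sum := by
  induction w with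
  | nil => simp
  | @cons u v c hadj p ih =>
    simp only [SimpleGraph.Walk.edges_cons, List.map_cons, List.sum_cons]
    calc edist u c ≤ edist u v + edist v c := edist_triangle _ _ _
      _ ≤ edgeLen s(u, v) + (p.edges.map edgeLen).sum := by
          rw [edgeLen_mk]; exact add_le_add le_rfl ih

/-- A sum over a duplicate-free list of edges of `G` is at most the total length. -/
lemma list_sum_le_graphLen [MetricSpace M] {G : SimpleGraph M} {l : List (Sym2 M)}
    (hnd : l.Nodup) (hsub : ∀ e ∈ l, e ∈ G.edgeSet) :
    (l.map edgeLen).sum ≤ graphLen G := by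
  classical
  rw [graphLen, tsum_subtype]
  calc (l.map edgeLen).sum
      = ∑ e ∈ l.toFinset, edgeLen e := (List.sum_toFinset _ hnd).symm
    _ = ∑ e ∈ l.toFinset, (G.edgeSet).indicator edgeLen e := by
        refine Finset.sum_congr rfl fun e he => ?_
        rw [Set.indicator_of_mem (hsub e (List.mem_toFinset.mp he))]
    _ ≤ ∑' e, (G.edgeSet).indicator edgeLen e := ENNReal.sum_le_tsum _

/-- If `M` is infinite and some distance `ρ(x,y)` equals the infimum `mst(M, ρ)` of
lengths of spanning trees, then no minimal spanning tree exists. -/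
theorem no_mst_of_dist_eq_mst [MetricSpace M] [Infinite M] (x y : M)
    (h : edist x y = ⨅ T : {G : SimpleGraph M // G.IsTree}, graphLen T.1) :
    ¬ ∃ T : SimpleGraph M, IsMST T := by
  classical
  rintro ⟨T, hTree, hFin, hMin⟩
  -- `graphLen T = edist x y`
  have h1 : graphLen T ≤ edist x y := by
    rw [h]; exact le_iInf fun T' => hMin T'.1 T'.2
  have h2 : edist x y ≤ graphLen T := by
    rw [h]; exact iInf_le (fun T' : {G : SimpleGraph M // G.IsTree} => graphLen T'.1) ⟨T, hTree⟩
  have hEq : graphLen T = edist x y := le_antisymm h1 h2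
  -- a path from x to y in T
  obtain ⟨w⟩ := hTree.isConnected.preconnected x y
  obtain ⟨p, hp⟩ := w.toPath
  -- a vertex z off the path
  obtain ⟨z, hz⟩ := Infinite.exists_notMem_finset p.support.toFinset
  rw [List.mem_toFinset] at hz
  have hzx : z ≠ x := fun hzx => hz (hzx ▸ p.start_mem_support)
  -- a walk from z to x; its first edge is not on p
  obtain ⟨q⟩ := hTree.isConnected.preconnected z x
  obtain ⟨u, hadj, he0⟩ : ∃ u, T.Adj z u ∧ s(z, u) ∉ p.edges := by
    cases q with
    | nil => exact absurd rfl hzx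
    | cons hadj q' =>
      refine ⟨_, hadj, fun hmem => hz ?_⟩
      exact p.fst_mem_support_of_mem_edges hmem
  -- the list of edges: the extra edge plus the path's edges
  have hnd : (s(z, u) :: p.edges).Nodup := List.nodup_cons.mpr ⟨he0, hp.edges_nodup⟩
  have hsub : ∀ e ∈ s(z, u) :: p.edges, e ∈ T.edgeSet := by
    intro e he
    rcases List.mem_cons.mp he with rfl | he
    · exact hadj
    · exact p.edges_subset_edgeSet he
  have hbig : edist z u + edist x y ≤ graphLen T := by
    calc edist z u + edist x y
        ≤ edgeLen s(z, u) + (p.edges.map edgeLen).sum := by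
          rw [edgeLen_mk]; exact add_le_add le_rfl (edist_le_walk_sum p)
      _ = ((s(z, u) :: p.edges).map edgeLen).sum := by simp
      _ ≤ graphLen T := list_sum_le_graphLen hnd hsub
  have hlt : edist x y < edist z u + edist x y := by
    rw [add_comm]
    exact ENNReal.lt_add_right (hEq ▸ hFin.ne) (by simpa using hadj.ne)
  exact absurd (hEq ▸ hlt.trans_le hbig) (lt_irrefl _)

end MSTPaper
end

section
/- Let (M, ρ) be a metric space admitting some spanning tree of finite length, and suppose that for every partition of M into nonempty subsets M₁ and M₂ the distance ρ(M₁, M₂) is attained by some pair of points. Then a minimal spanning tree on (M, ρ) exists. -/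
open scoped ENNReal

namespace MSTPaper

variable {M : Type*}

lemma setDist_le [MetricSpace M] {A B : Set M} {x y : M} (hx : x ∈ A) (hy : y ∈ B) :
    setDist A B ≤ edist x y :=
  le_trans (iInf₂_le x hx) (iInf₂_le y hy)

lemma unif_disc [MetricSpace M]
    (hatt : ∀ A B : Set M, A.Nonempty → B.Nonempty → Disjoint A B → A ∪ B = Set.univ →
      ∃ a ∈ A, ∃ b ∈ B, edist a b = setDist A B) :
    ∃ δ : ℝ≥0∞, 0 < δ ∧ ∀ x y : M, x ≠ y → δ ≤ edist x y := by
  classical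
  by_contra h
  push_neg at h
  -- there exist two distinct points
  obtain ⟨x0, y0, hxy0, -⟩ := h 1 one_pos
  have hnt : Nontrivial M := ⟨x0, y0, hxy0⟩
  -- each singleton is at positive distance from its complement
  have hr : ∀ z : M, 0 < setDist {z} ({z}ᶜ) := by
    intro z
    rw [pos_iff_ne_zero]
    intro h0
    obtain ⟨w, hw⟩ := exists_ne z
    obtain ⟨a, ha, b, hb, hab⟩ := hatt {z} ({z}ᶜ) ⟨z, rfl⟩ ⟨w, hw⟩
      disjoint_compl_right (Set.union_compl_self _)
    rw [h0, edist_eq_zero] at hab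
    exact hb (hab ▸ ha)
  -- we can always pick a short pair avoiding a given finite set
  have key : ∀ (E : Finset M) (n : ℕ), ∃ p : M × M, p.1 ≠ p.2 ∧
      edist p.1 p.2 < 2⁻¹ ^ n ∧ p.1 ∉ E ∧ p.2 ∉ E := by
    intro E n
    set δ : ℝ≥0∞ := min (2⁻¹ ^ n) (E.inf fun z => setDist {z} ({z}ᶜ)) with hδdef
    have hpow : (0 : ℝ≥0∞) < 2⁻¹ ^ n := by
      apply ENNReal.pow_pos
      simp
    have hδ : 0 < δ := by
      refine lt_min hpow ?_
      exact (Finset.lt_inf_iff ENNReal.zero_lt_top).mpr fun z _ => hr z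
    obtain ⟨x, y, hxy, hlt⟩ := h δ hδ
    refine ⟨(x, y), hxy, hlt.trans_le (min_le_left _ _), ?_, ?_⟩
    · intro hxE
      have h1 : setDist {x} ({x}ᶜ) ≤ edist x y :=
        setDist_le rfl (by simpa using hxy.symm)
      have h2 : δ ≤ edist x y :=
        le_trans (min_le_right _ _) (le_trans (Finset.inf_le hxE) h1)
      exact absurd hlt (not_lt.mpr h2)
    · intro hyE
      have h1 : setDist {y} ({y}ᶜ) ≤ edist y x :=
        setDist_le rfl (by simpa using hxy)
      have h2 : δ ≤ edist x y := by
        rw [edist_comm]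
        exact le_trans (min_le_right _ _) (le_trans (Finset.inf_le hyE) h1)
      exact absurd hlt (not_lt.mpr h2)
  obtain ⟨pick, hpick⟩ := Classical.axiomOfChoice
    (fun En : Finset M × ℕ => key En.1 En.2)
  -- recursively build pairs with all-distinct endpoints
  let F : ℕ → Finset M × (M × M) := fun n => Nat.rec
    (⟨∅, pick (∅, 0)⟩)
    (fun n ih => ⟨ih.1 ∪ {ih.2.1, ih.2.2}, pick (ih.1 ∪ {ih.2.1, ih.2.2}, n + 1)⟩) n
  set E : ℕ → Finset M := fun n => (F n).1 with hE
  set x : ℕ → M := fun n => (F n).2.1 with hx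
  set y : ℕ → M := fun n => (F n).2.2 with hy
  have hFsucc : ∀ n, E (n + 1) = E n ∪ {x n, y n} := fun n => rfl
  have hspec : ∀ n, x n ≠ y n ∧ edist (x n) (y n) < 2⁻¹ ^ n ∧ x n ∉ E n ∧ y n ∉ E n := by
    intro n
    cases n with
    | zero => exact hpick (∅, 0)
    | succ m => exact hpick (E m ∪ {x m, y m}, m + 1)
  have hmem : ∀ n, x n ∈ E (n + 1) ∧ y n ∈ E (n + 1) := by
    intro n
    rw [hFsucc]
    constructor <;> · apply Finset.mem_union_right; simp
  have hmono : ∀ m n, m ≤ n → E m ⊆ E n := by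
    intro m n hmn
    induction n with
    | zero => rw [Nat.le_zero.mp hmn]
    | succ k ih =>
      rcases Nat.lt_or_ge m (k+1) with hlt | hge
      · exact (ih (Nat.lt_succ_iff.mp hlt)).trans (by rw [hFsucc]; exact Finset.subset_union_left)
      · rw [Nat.le_antisymm hmn hge]
  have hyx : ∀ m n, y m ≠ x n := by
    intro m n
    rcases lt_trichotomy m n with hlt | heq | hgt
    · intro hc
      exact (hspec n).2.2.1 (hc ▸ hmono (m+1) n hlt ((hmem m).2))
    · exact heq ▸ fun hc => (hspec m).1 hc.symm
    · intro hc
      exact (hspec m).2.2.2 (hc ▸ hmono (n+1) m hgt ((hmem n).1))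
  -- the partition into A = range x and its complement
  set A : Set M := Set.range x with hA
  have hyA : ∀ n, y n ∈ Aᶜ := by
    intro n hmem
    obtain ⟨k, hk⟩ := hmem
    exact hyx n k hk.symm
  obtain ⟨a, ha, b, hb, hab⟩ := hatt A Aᶜ ⟨x 0, 0, rfl⟩ ⟨y 0, hyA 0⟩
    disjoint_compl_right (Set.union_compl_self _)
  have habne : a ≠ b := fun hc => hb (hc ▸ ha)
  have h0 : setDist A Aᶜ ≠ 0 := by
    rw [← hab]
    simpa using habne
  obtain ⟨n, hn⟩ := ENNReal.exists_inv_two_pow_lt h0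
  have : setDist A Aᶜ ≤ edist (x n) (y n) := setDist_le ⟨n, rfl⟩ (hyA n)
  exact absurd (this.trans_lt (hspec n).2.1) (not_lt.mpr hn.le)

/-- If `(M, ρ)` is good (has a spanning tree of finite length) and the distance
between the parts of every partition of `M` is attained, then a minimal spanning
tree on `(M, ρ)` exists. -/
theorem mst_exists_of_attained_distances [MetricSpace M]
    (hgood : ∃ G : SimpleGraph M, G.IsTree ∧ graphLen G < ⊤)
    (hatt : ∀ A B : Set M, A.Nonempty → B.Nonempty → Disjoint A B → A ∪ B = Set.univ →
      ∃ a ∈ A, ∃ b ∈ B, edist a b = setDist A B) :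
    ∃ T : SimpleGraph M, IsMST T := by
  classical
  obtain ⟨G, hG, hGlen⟩ := hgood
  obtain ⟨δ, hδ0, hδ⟩ := unif_disc hatt
  have hfin : Finite M := by
    by_contra hinf
    rw [not_finite_iff_infinite] at hinf
    have hadj : ∀ v : M, ∃ w, G.Adj v w := by
      intro v
      obtain ⟨w, hw⟩ := exists_ne v
      obtain ⟨p⟩ := hG.1.preconnected v w
      cases p with
      | nil => exact absurd rfl hw.symm
      | cons h q => exact ⟨_, h⟩
    have hES : G.edgeSet.Infinite := by
      intro hfinES
      have hcover : (Set.univ : Set M) ⊆ ⋃ e ∈ G.edgeSet, {v : M | v ∈ (e : Sym2 M)} := by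
        intro v _
        obtain ⟨w, hw⟩ := hadj v
        exact Set.mem_biUnion hw (Sym2.mem_mk_left v w)
      have hfine : ∀ e ∈ G.edgeSet, ({v : M | v ∈ (e : Sym2 M)}).Finite := by
        intro e _
        induction e using Sym2.ind with
        | _ a b =>
          have : {v : M | v ∈ s(a, b)} = {a, b} := by
            ext v; simp [Sym2.mem_iff]
          rw [this]
          exact (Set.finite_singleton b).insert a
      have : (Set.univ : Set M).Finite :=
        Set.Finite.subset (Set.Finite.biUnion hfinES hfine) hcover
      rw [Set.finite_univ_iff] at this
      exact not_finite M
    have hsub : Infinite G.edgeSet := hES.to_subtype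
    have hlb : ∀ e : G.edgeSet, δ ≤ edgeLen (e : Sym2 M) := by
      rintro ⟨e, he⟩
      induction e using Sym2.ind with
      | _ a b =>
        rw [SimpleGraph.mem_edgeSet] at he
        exact hδ a b he.ne
    have htop : graphLen G = ⊤ := by
      refine top_le_iff.mp ?_
      calc (⊤ : ℝ≥0∞) = ∑' _ : G.edgeSet, δ :=
            (ENNReal.tsum_const_eq_top_of_ne_zero hδ0.ne').symm
        _ ≤ graphLen G := ENNReal.tsum_le_tsum hlb
    exact absurd htop hGlen.ne
  have : Fintype M := Fintype.ofFinite M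
  let s : Finset (SimpleGraph M) := Finset.univ.filter fun T => T.IsTree
  have hs : s.Nonempty := ⟨G, by simp [s, hG]⟩
  obtain ⟨T, hTs, hTmin⟩ := Finset.exists_min_image s graphLen hs
  rw [Finset.mem_filter] at hTs
  have hmin : ∀ T' : SimpleGraph M, T'.IsTree → graphLen T ≤ graphLen T' := by
    intro T' hT'
    exact hTmin T' (Finset.mem_filter.mpr ⟨Finset.mem_univ _, hT'⟩)
  exact ⟨T, hTs.2, lt_of_le_of_lt (hmin G hG) hGlen, hmin⟩

end MSTPaper
end
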